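/- In NIM with Cash with subtraction set A = {1, 2} and an even number n of stones, if Player 1 has d dollars with d < n/2 + 1 and Player 2 has e dollars with e ≥ n/2, then Player 2 wins. -/
import Mathlib


/-- NIM with Cash, A = {1,2}, n even: if d < n/2 + 1 and e ≥ n/2, then
Player 2 wins. -/
theorem nimCash_12_even_p2_wins (W : ℕ → ℕ → ℕ → Prop)
    (hW : ∀ n m m', W n m m' ↔
      ∃ a ∈ ({1, 2} : Finset ℕ), a ≤ n ∧ a ≤ m ∧ ¬ W (n - a) m' (m - a))
    (n d e : ℕ) (hn : Even n) (hd : d < n / 2 + 1) (he : n / 2 ≤ e) :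
    ¬ W n d e := by
  have key : ∀ n, ∀ d e : ℕ, Even n → d ≤ n / 2 → n / 2 ≤ e → ¬ W n d e := by
    intro n
    induction n using Nat.strong_induction_on with
    | _ n ih =>
      intro d e hn hd he hWn
      obtain ⟨k, hk⟩ := hn
      have hk2 : n / 2 = k := by omega
      rw [hW] at hWn
      obtain ⟨a, ha, han, had, hloss⟩ := hWn
      simp only [Finset.mem_insert, Finset.mem_singleton] at ha
      have ha12 : a = 1 ∨ a = 2 := ha
      have hak : a ≤ k := by omega
      apply hloss
      rw [hW]
      refine ⟨a, by simpa using ha, by omega, by omega, ?_⟩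
      have heq : n - a - a = (k - a) + (k - a) := by omega
      exact ih (n - a - a) (by omega) (d - a) (e - a) ⟨k - a, heq⟩
        (by omega) (by omega)
  exact key n d e hn (by omega) he
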